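/- arXiv:2508.08772 — 2 statements merged into one kernel-verified Lean document; each statement's English description precedes it below -/
import Mathlib

section
/- For any vector s ∈ ℝ^n (n ≥ 1) and τ > 0, the gap between the maximum and the softmax-weighted average is bounded: 0 ≤ max_i s_i − ∑_i σ_i s_i ≤ 2τ·log n, where σ is the softmax of s at temperature τ. -/
open Real Finset

/-- Gap between the max and the softmax-weighted average: 0 ≤ max s − ∑ σ_i s_i ≤ 2τ log n. -/
theorem softmax_max_gap (n : ℕ) (hn : 1 ≤ n) (s : Fin n → ℝ) (τ : ℝ) (hτ : 0 < τ) :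
    let σ : Fin n → ℝ := fun i => Real.exp (s i / τ) / ∑ k, Real.exp (s k / τ)
    let M : ℝ := Finset.univ.sup'
      (by simpa [Finset.univ_nonempty_iff] using Fin.pos_iff_nonempty.mp hn) s
    0 ≤ M - ∑ i, σ i * s i ∧ M - ∑ i, σ i * s i ≤ 2 * τ * Real.log n := by
  intro σ M
  have hne : (Finset.univ : Finset (Fin n)).Nonempty := by
    simpa [Finset.univ_nonempty_iff] using Fin.pos_iff_nonempty.mp hn
  have hσdef : ∀ i, σ i = Real.exp (s i / τ) / ∑ k, Real.exp (s k / τ) := fun i => rfl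
  have hMdef : M = Finset.univ.sup' hne s := rfl
  clear_value σ M
  have hZpos : 0 < ∑ k, Real.exp (s k / τ) :=
    Finset.sum_pos (fun i _ => Real.exp_pos _) hne
  have hσnn : ∀ i, 0 ≤ Real.exp (s i / τ) / ∑ k, Real.exp (s k / τ) :=
    fun i => div_nonneg (Real.exp_pos _).le hZpos.le
  have hσnn' : ∀ i, 0 ≤ σ i := fun i => (hσdef i) ▸ hσnn i
  have hσsum : ∑ i, σ i = 1 := by
    simp only [hσdef, ← Finset.sum_div]
    exact div_self hZpos.ne'
  have hMi : ∀ i, s i ≤ M := fun i => hMdef ▸ Finset.le_sup' s (Finset.mem_univ i)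
  obtain ⟨j, -, hj⟩ := Finset.exists_mem_eq_sup' hne s
  have hMj : M = s j := hMdef ▸ hj
  -- change of variables
  set a : Fin n → ℝ := fun i => Real.exp ((s i - M) / τ) with ha
  have hapos : ∀ i, 0 < a i := fun i => Real.exp_pos _
  set Z' : ℝ := ∑ i, a i with hZ'
  have haj : a j = 1 := by simp [ha, hMj]
  have hZ'1 : 1 ≤ Z' := by
    rw [← haj]
    exact Finset.single_le_sum (f := a) (fun i _ => (hapos i).le) (Finset.mem_univ j)
  have hZ'pos : 0 < Z' := lt_of_lt_of_le one_pos hZ'1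
  have hσa : ∀ i, σ i = a i / Z' := by
    intro i
    rw [hσdef i]
    have h1 : ∀ i, a i = Real.exp (s i / τ) * Real.exp (-(M / τ)) := by
      intro i
      show Real.exp ((s i - M) / τ) = _
      rw [show (s i - M) / τ = s i / τ + -(M / τ) by ring, Real.exp_add]
    have h2 : Z' = (∑ k, Real.exp (s k / τ)) * Real.exp (-(M / τ)) := by
      rw [hZ', Finset.sum_mul]
      exact Finset.sum_congr rfl fun i _ => h1 i
    rw [h1 i, h2, mul_div_mul_right _ _ (Real.exp_ne_zero _)]
  have hloga : ∀ i, Real.log (a i) = (s i - M) / τ := fun i => Real.log_exp _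
  have hn1 : (1 : ℝ) ≤ (n : ℝ) := by exact_mod_cast hn
  have hnpos : (0 : ℝ) < (n : ℝ) := lt_of_lt_of_le one_pos hn1
  have hlogn : 0 ≤ Real.log n := Real.log_nonneg hn1
  -- the gap equals ∑ σ i * (M - s i)
  have hgap : M - ∑ i, σ i * s i = ∑ i, σ i * (M - s i) := by
    rw [Finset.sum_congr rfl fun i _ => mul_sub (σ i) M (s i), Finset.sum_sub_distrib,
      ← Finset.sum_mul, hσsum]
    ring
  constructor
  · rw [hgap]
    exact Finset.sum_nonneg fun i _ => mul_nonneg (hσnn' i) (sub_nonneg.mpr (hMi i))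
  · rw [hgap]
    -- key pointwise bound: a i * (-(log (a i))) ≤ a i * log n + 1/n - a i
    have key : ∀ i, a i * (-(Real.log (a i))) ≤ a i * Real.log n + 1 / n - a i := by
      intro i
      have h1 : Real.log ((n : ℝ) * a i) ≤ (n : ℝ) * a i - 1 :=
        Real.log_le_sub_one_of_pos (mul_pos hnpos (hapos i))
      have h2 : Real.log ((n : ℝ) * a i) = Real.log n + Real.log (a i) :=
        Real.log_mul hnpos.ne' (hapos i).ne'
      -- log n + log (a i) ≤ n * a i - 1, i.e. -(log a i) ≥ ... wrong direction.
      -- Use instead log ((n * a i)⁻¹) ≤ (n * a i)⁻¹ - 1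
      have h3 : Real.log (((n : ℝ) * a i)⁻¹) ≤ ((n : ℝ) * a i)⁻¹ - 1 :=
        Real.log_le_sub_one_of_pos (inv_pos.mpr (mul_pos hnpos (hapos i)))
      have h4 : Real.log (((n : ℝ) * a i)⁻¹) = -(Real.log n + Real.log (a i)) := by
        rw [Real.log_inv, h2]
      rw [h4] at h3
      have h5 : -(Real.log (a i)) ≤ Real.log n + ((n : ℝ) * a i)⁻¹ - 1 := by linarith
      have h6 : a i * (-(Real.log (a i))) ≤ a i * (Real.log n + ((n : ℝ) * a i)⁻¹ - 1) :=
        mul_le_mul_of_nonneg_left h5 (hapos i).le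
      have h7 : a i * ((n : ℝ) * a i)⁻¹ = 1 / n := by
        field_simp
        exact mul_inv_cancel₀ (hapos i).ne'
      calc a i * (-(Real.log (a i))) ≤ a i * (Real.log n + ((n : ℝ) * a i)⁻¹ - 1) := h6
        _ = a i * Real.log n + a i * ((n : ℝ) * a i)⁻¹ - a i := by ring
        _ = a i * Real.log n + 1 / n - a i := by rw [h7]
    have hsum : ∑ i, a i * (-(Real.log (a i))) ≤ Z' * Real.log n := by
      calc ∑ i, a i * (-(Real.log (a i)))
          ≤ ∑ i, (a i * Real.log n + 1 / n - a i) :=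
            Finset.sum_le_sum fun i _ => key i
        _ = Z' * Real.log n + (n : ℝ) * (1 / n) - Z' := by
            rw [Finset.sum_sub_distrib, Finset.sum_add_distrib, ← Finset.sum_mul]
            simp [hZ', Finset.card_univ]
        _ = Z' * Real.log n + 1 - Z' := by
            rw [mul_one_div, div_self hnpos.ne']
        _ ≤ Z' * Real.log n := by linarith
    have hterm : ∀ i, σ i * (M - s i) = (τ / Z') * (a i * (-(Real.log (a i)))) := by
      intro i
      rw [hσa i, hloga i]
      field_simp
      ring
    calc ∑ i, σ i * (M - s i)
        = (τ / Z') * ∑ i, a i * (-(Real.log (a i))) := by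
          rw [Finset.mul_sum]; exact Finset.sum_congr rfl fun i _ => hterm i
      _ ≤ (τ / Z') * (Z' * Real.log n) := by
          apply mul_le_mul_of_nonneg_left hsum (div_nonneg hτ.le hZ'pos.le)
      _ = τ * Real.log n := by field_simp
      _ ≤ 2 * τ * Real.log n := by nlinarith
end

section
/- Let r, z ∈ ℝ^n, set s = r + z, and let w = argmax_i s_i. Suppose z_w = max_i z_i (the winner has the largest boost). Then for the softmax σ of s at temperature τ > 0, the hard-vs-soft gap satisfies r_w − ∑_i σ_i r_i ≤ max_i s_i − ∑_i σ_i s_i, and consequently r_w − ∑_i σ_i r_i ≤ 2τ·log n. -/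
open Real Finset

/-- Hard-vs-soft gap when the winner has the largest boost. -/
theorem hard_soft_gap (n : ℕ) (hn : 1 ≤ n) (r z : Fin n → ℝ) (τ : ℝ) (hτ : 0 < τ)
    (w : Fin n)
    (hw : ∀ i, r i + z i ≤ r w + z w)
    (hzw : ∀ i, z i ≤ z w) :
    let s : Fin n → ℝ := fun i => r i + z i
    let σ : Fin n → ℝ := fun i => Real.exp (s i / τ) / ∑ k, Real.exp (s k / τ)
    (r w - ∑ i, σ i * r i ≤ s w - ∑ i, σ i * s i) ∧
    (r w - ∑ i, σ i * r i ≤ 2 * τ * Real.log n) := by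
  intro s σ
  have hne : (Finset.univ : Finset (Fin n)).Nonempty := by
    exact Finset.univ_nonempty_iff.2 (Fin.pos_iff_nonempty.1 hn)
  set Z : ℝ := ∑ k, Real.exp (s k / τ) with hZdef
  have hZpos : 0 < Z := Finset.sum_pos (fun i _ => Real.exp_pos _) hne
  have hσnn : ∀ i, 0 ≤ σ i := fun i => div_nonneg (Real.exp_pos _).le hZpos.le
  have hσsum : ∑ i, σ i = 1 := by
    simp only [σ]
    rw [← Finset.sum_div, ← hZdef, div_self hZpos.ne']
  -- σ w ≤ 1
  have hσw1 : σ w ≤ 1 := by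
    have : Real.exp (s w / τ) ≤ Z := by
      exact Finset.single_le_sum (f := fun k => Real.exp (s k / τ))
        (fun i _ => (Real.exp_pos _).le) (Finset.mem_univ w)
    simpa [σ] using (div_le_one hZpos).2 this
  have hσwpos : 0 < σ w := div_pos (Real.exp_pos _) hZpos
  -- Part 1
  have part1 : r w - ∑ i, σ i * r i ≤ s w - ∑ i, σ i * s i := by
    have hz : ∑ i, σ i * z i ≤ z w := by
      calc ∑ i, σ i * z i ≤ ∑ i, σ i * z w :=
            Finset.sum_le_sum (fun i _ => mul_le_mul_of_nonneg_left (hzw i) (hσnn i))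
        _ = z w := by rw [← Finset.sum_mul, hσsum, one_mul]
    have hsplit : ∑ i, σ i * s i = (∑ i, σ i * r i) + ∑ i, σ i * z i := by
      rw [← Finset.sum_add_distrib]
      exact Finset.sum_congr rfl (fun i _ => by simp [s]; ring)
    simp only [s]
    rw [hsplit]
    linarith
  refine ⟨part1, ?_⟩
  -- Part 2 : s w - ∑ σ s ≤ τ * log (n * σ w)
  have key : ∀ i, σ i * Real.exp ((s w - s i) / τ) = σ w := by
    intro i
    simp only [σ]
    rw [div_mul_eq_mul_div, ← Real.exp_add]
    congr 1
    field_simp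
    ring_nf
  have hjensen : ∑ i, σ i * ((s w - s i) / τ) ≤ Real.log (n * σ w) := by
    have hcc : ConcaveOn ℝ (Set.Ioi 0) Real.log := strictConcaveOn_log_Ioi.concaveOn
    have := hcc.le_map_sum (t := Finset.univ) (w := σ)
      (p := fun i => Real.exp ((s w - s i) / τ))
      (fun i _ => hσnn i) hσsum (fun i _ => Real.exp_pos _)
    simp only [smul_eq_mul] at this
    have hsum : ∑ i, σ i * Real.exp ((s w - s i) / τ) = n * σ w := by
      simp [key, Finset.sum_const, Finset.card_univ]
    rw [hsum] at this
    calc ∑ i, σ i * ((s w - s i) / τ)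
        = ∑ i, σ i * Real.log (Real.exp ((s w - s i) / τ)) := by
          simp [Real.log_exp]
      _ ≤ Real.log (n * σ w) := this
  have hgap : s w - ∑ i, σ i * s i ≤ τ * Real.log (n * σ w) := by
    have h1 : s w - ∑ i, σ i * s i = ∑ i, σ i * (s w - s i) := by
      rw [Finset.sum_congr rfl (fun i _ => mul_sub (σ i) (s w) (s i)),
        Finset.sum_sub_distrib, ← Finset.sum_mul, hσsum, one_mul]
    have h2 : ∑ i, σ i * (s w - s i) = τ * ∑ i, σ i * ((s w - s i) / τ) := by
      rw [Finset.mul_sum]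
      exact Finset.sum_congr rfl (fun i _ => by field_simp)
    rw [h1, h2]
    exact mul_le_mul_of_nonneg_left hjensen hτ.le
  have hlogle : Real.log (n * σ w) ≤ Real.log n := by
    have hn' : (0:ℝ) < n := by exact_mod_cast hn
    calc Real.log (n * σ w) ≤ Real.log (n * 1) :=
          Real.log_le_log (by positivity) (by nlinarith)
      _ = Real.log n := by rw [mul_one]
  have hlogn : 0 ≤ Real.log n := Real.log_nonneg (by exact_mod_cast hn)
  calc r w - ∑ i, σ i * r i ≤ s w - ∑ i, σ i * s i := part1
    _ ≤ τ * Real.log (n * σ w) := hgap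
    _ ≤ τ * Real.log n := mul_le_mul_of_nonneg_left hlogle hτ.le
    _ ≤ 2 * τ * Real.log n := by nlinarith
end
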